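/- (Watson's Lemma.) Let T > 0, let p be integrable on (0,T), let β > −1, N ≥ 1 an integer, and a₀,…,a_{N−1} real numbers such that p(t) − t^β Σ_{i=0}^{N−1} a_i t^i = O(t^{β+N}) as t → 0⁺. Then, as κ → +∞, ∫_0^T p(t) e^{−κt} dt − Σ_{i=0}^{N−1} a_i Γ(β+i+1) κ^{−β−1−i} = O(κ^{−β−1−N}), where Γ is the Gamma function. -/

import Mathlib

open MeasureTheory Real Filter Asymptotics

lemma wl_integrableOn (b κ : ℝ) (hb : -1 < b) (hκ : 0 < κ) :
    IntegrableOn (fun t : ℝ => t ^ b * Real.exp (-κ * t)) (Set.Ioi 0) := by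
  have := integrableOn_rpow_mul_exp_neg_mul_rpow hb one_pos hκ
  simpa [Real.rpow_one] using this

lemma wl_integral (b κ : ℝ) (hb : -1 < b) (hκ : 0 < κ) :
    ∫ t in Set.Ioi (0:ℝ), t ^ b * Real.exp (-κ * t)
      = (1/κ) ^ (b+1) * Real.Gamma (b+1) := by
  have := Real.integral_rpow_mul_exp_neg_mul_Ioi (by linarith : (0:ℝ) < b + 1) hκ
  simpa [neg_mul, add_sub_cancel_right] using this

lemma wl_exp_littleO (d r : ℝ) (hd : 0 < d) :
    (fun κ : ℝ => Real.exp (-(d * κ))) =o[atTop] fun κ : ℝ => κ ^ r := by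
  rw [isLittleO_iff_tendsto']
  · have h := tendsto_rpow_mul_exp_neg_mul_atTop_nhds_zero (-r) d hd
    refine h.congr' ?_
    filter_upwards [eventually_gt_atTop 0] with κ hκ
    rw [div_eq_mul_inv, ← Real.rpow_neg hκ.le]
    ring_nf
  · filter_upwards [eventually_gt_atTop 0] with κ hκ h
    exact absurd h (by positivity)

lemma wl_tail (b d : ℝ) (hb : -1 < b) (hd : 0 < d) :
    (fun κ : ℝ => ∫ t in Set.Ioi d, t ^ b * Real.exp (-κ * t))
      =O[atTop] fun κ : ℝ => Real.exp (-(d * κ)) := by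
  set C : ℝ := ∫ t in Set.Ioi d, t ^ b * Real.exp (-1 * t) with hC
  have hint1 : IntegrableOn (fun t : ℝ => t ^ b * Real.exp (-1 * t)) (Set.Ioi d) :=
    (wl_integrableOn b 1 hb one_pos).mono_set (Set.Ioi_subset_Ioi hd.le)
  rw [isBigO_iff]
  refine ⟨C * Real.exp d, ?_⟩
  filter_upwards [eventually_ge_atTop 1] with κ hκ
  have hκ0 : (0:ℝ) < κ := lt_of_lt_of_le one_pos hκ
  have hintκ : IntegrableOn (fun t : ℝ => t ^ b * Real.exp (-κ * t)) (Set.Ioi d) :=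
    (wl_integrableOn b κ hb hκ0).mono_set (Set.Ioi_subset_Ioi hd.le)
  have key : ∫ t in Set.Ioi d, t ^ b * Real.exp (-κ * t)
      ≤ ∫ t in Set.Ioi d, (t ^ b * Real.exp (-1 * t)) * Real.exp (-(κ - 1) * d) := by
    refine setIntegral_mono_on hintκ (hint1.mul_const _) measurableSet_Ioi ?_
    intro t ht
    have ht0 : (0:ℝ) < t := hd.trans ht
    have : Real.exp (-κ * t) ≤ Real.exp (-1 * t) * Real.exp (-(κ - 1) * d) := by
      rw [← Real.exp_add]
      apply Real.exp_le_exp.2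
      nlinarith [le_of_lt (Set.mem_Ioi.1 ht), hκ]
    calc t ^ b * Real.exp (-κ * t) ≤ t ^ b * (Real.exp (-1 * t) * Real.exp (-(κ - 1) * d)) :=
          mul_le_mul_of_nonneg_left this (Real.rpow_nonneg ht0.le b)
      _ = (t ^ b * Real.exp (-1 * t)) * Real.exp (-(κ - 1) * d) := by ring
  have hnn : 0 ≤ ∫ t in Set.Ioi d, t ^ b * Real.exp (-κ * t) := by
    apply setIntegral_nonneg measurableSet_Ioi
    intro t ht
    have : (0:ℝ) < t := hd.trans ht
    positivity
  rw [Real.norm_eq_abs, abs_of_nonneg hnn, Real.norm_eq_abs, abs_of_pos (Real.exp_pos _)]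
  rw [integral_mul_const] at key
  calc (∫ t in Set.Ioi d, t ^ b * Real.exp (-κ * t))
      ≤ C * Real.exp (-(κ - 1) * d) := key
    _ = C * Real.exp d * Real.exp (-(d * κ)) := by
        rw [mul_assoc, ← Real.exp_add]; ring_nf

lemma wl_mul_exp (T' κ : ℝ) (hκ : 0 ≤ κ) {f : ℝ → ℝ} (hf : IntegrableOn f (Set.Ioc 0 T')) :
    IntegrableOn (fun t => f t * Real.exp (-κ * t)) (Set.Ioc 0 T') := by
  have hm : AEStronglyMeasurable (fun t : ℝ => Real.exp (-κ * t))
      (volume.restrict (Set.Ioc 0 T')) :=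
    (Real.continuous_exp.comp (continuous_const.mul continuous_id)).aestronglyMeasurable
  have hb : ∀ᵐ t ∂(volume.restrict (Set.Ioc 0 T')), ‖Real.exp (-κ * t)‖ ≤ 1 := by
    rw [ae_restrict_iff' measurableSet_Ioc]
    refine ae_of_all _ fun t ht => ?_
    rw [Real.norm_eq_abs, abs_of_pos (Real.exp_pos _)]
    exact Real.exp_le_one_iff.2 (by nlinarith [ht.1])
  exact (Integrable.bdd_mul hf hm hb).congr (ae_of_all _ fun t => mul_comm _ _)

theorem watson_lemma (T : ℝ) (hT : 0 < T) (p : ℝ → ℝ)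
    (hp : IntegrableOn p (Set.Ioc 0 T)) (β : ℝ) (hβ : -1 < β) (N : ℕ) (hN : 1 ≤ N)
    (a : ℕ → ℝ)
    (hasymp : (fun t : ℝ => p t - t ^ β * ∑ i ∈ Finset.range N, a i * t ^ i)
      =O[nhdsWithin 0 (Set.Ioi 0)] fun t : ℝ => t ^ (β + N)) :
    (fun κ : ℝ => (∫ t in (0:ℝ)..T, p t * Real.exp (-κ * t)) -
        ∑ i ∈ Finset.range N, a i * Real.Gamma (β + i + 1) * κ ^ (-β - 1 - i))
      =O[atTop] fun κ : ℝ => κ ^ (-β - 1 - N) := by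
  set R : ℝ → ℝ := fun t => p t - t ^ β * ∑ i ∈ Finset.range N, a i * t ^ i with hRdef
  -- bound near zero
  obtain ⟨C, hCpos, hCb⟩ := hasymp.exists_pos
  rw [isBigOWith_iff, eventually_nhdsWithin_iff, Metric.eventually_nhds_iff] at hCb
  obtain ⟨ε, hε, hbd⟩ := hCb
  set δ : ℝ := min (ε/2) T with hδdef
  have hδ0 : 0 < δ := lt_min (by linarith) hT
  have hδT : δ ≤ T := min_le_right _ _
  have hδε : δ < ε := lt_of_le_of_lt (min_le_left _ _) (by linarith)
  have hbd' : ∀ t ∈ Set.Ioc (0:ℝ) δ, ‖R t‖ ≤ C * t ^ (β + N) := by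
    intro t ht
    have h1 : dist t 0 < ε := by
      rw [Real.dist_eq, sub_zero, abs_of_pos ht.1]; exact lt_of_le_of_lt ht.2 hδε
    have := hbd h1 ht.1
    rwa [Real.norm_eq_abs (t ^ (β + N)), abs_of_nonneg (Real.rpow_nonneg ht.1.le _)] at this
  have hNR : (-1:ℝ) < β + N := by have : (0:ℝ) ≤ N := Nat.cast_nonneg N; linarith
  have hmi : ∀ i : ℕ, (-1:ℝ) < β + i := fun i => by
    have : (0:ℝ) ≤ i := Nat.cast_nonneg i; linarith
  -- pointwise polynomial identity
  have hpt : ∀ t : ℝ, 0 < t →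
      t ^ β * ∑ i ∈ Finset.range N, a i * t ^ i
        = ∑ i ∈ Finset.range N, a i * t ^ (β + (i:ℝ)) := by
    intro t ht
    rw [Finset.mul_sum]
    refine Finset.sum_congr rfl fun i _ => ?_
    rw [Real.rpow_add ht, Real.rpow_natCast]; ring
  -- integrability of R
  have hmom0 : ∀ i : ℕ, IntegrableOn (fun t : ℝ => t ^ (β + (i:ℝ))) (Set.Ioc 0 T) :=
    fun i => (intervalIntegral.intervalIntegrable_rpow' (hmi i)).1
  have hR : IntegrableOn R (Set.Ioc 0 T) := by
    have hs : IntegrableOn (fun t : ℝ => ∑ i ∈ Finset.range N, a i * t ^ (β + (i:ℝ)))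
        (Set.Ioc 0 T) := integrable_finset_sum _ fun i _ => (hmom0 i).const_mul _
    exact hp.sub (hs.congr_fun (fun t ht => (hpt t ht.1).symm) measurableSet_Ioc)
  have hRκ : ∀ κ : ℝ, 0 ≤ κ →
      IntegrableOn (fun t => R t * Real.exp (-κ * t)) (Set.Ioc 0 T) :=
    fun κ hκ => wl_mul_exp T κ hκ hR
  -- rpow bookkeeping
  have hpow : ∀ κ : ℝ, 0 < κ → ∀ x : ℝ, (1/κ) ^ x = κ ^ (-x) := by
    intro κ hκ x
    rw [one_div, Real.inv_rpow hκ.le, ← Real.rpow_neg hκ.le]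
  -- the eventual identity
  set G : ℝ → ℝ := fun κ =>
    (∫ t in Set.Ioc (0:ℝ) δ, R t * Real.exp (-κ * t))
      + (∫ t in Set.Ioc δ T, R t * Real.exp (-κ * t))
      + ∑ i ∈ Finset.range N, (-(a i)) * ∫ t in Set.Ioi T, t ^ (β + (i:ℝ)) * Real.exp (-κ * t)
    with hGdef
  have hFG : (fun κ : ℝ => (∫ t in (0:ℝ)..T, p t * Real.exp (-κ * t)) -
        ∑ i ∈ Finset.range N, a i * Real.Gamma (β + i + 1) * κ ^ (-β - 1 - i))
      =ᶠ[atTop] G := by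
    filter_upwards [eventually_gt_atTop 0] with κ hκ0
    have hti : ∀ i : ℕ, IntegrableOn (fun t : ℝ => t ^ (β + (i:ℝ)) * Real.exp (-κ * t))
        (Set.Ioi 0) := fun i => wl_integrableOn _ κ (hmi i) hκ0
    have htIoc : ∀ i : ℕ, IntegrableOn (fun t : ℝ => t ^ (β + (i:ℝ)) * Real.exp (-κ * t))
        (Set.Ioc 0 T) := fun i => (hti i).mono_set Set.Ioc_subset_Ioi_self
    have htIoiT : ∀ i : ℕ, IntegrableOn (fun t : ℝ => t ^ (β + (i:ℝ)) * Real.exp (-κ * t))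
        (Set.Ioi T) := fun i => (hti i).mono_set (Set.Ioi_subset_Ioi hT.le)
    have hRe := hRκ κ hκ0.le
    -- split Ioi 0 integrals
    have hIocIoi : ∀ i : ℕ,
        (∫ t in Set.Ioc (0:ℝ) T, t ^ (β + (i:ℝ)) * Real.exp (-κ * t))
          = (1/κ) ^ (β + (i:ℝ) + 1) * Real.Gamma (β + (i:ℝ) + 1)
            - ∫ t in Set.Ioi T, t ^ (β + (i:ℝ)) * Real.exp (-κ * t) := by
      intro i
      have hu : Set.Ioc (0:ℝ) T ∪ Set.Ioi T = Set.Ioi 0 := Set.Ioc_union_Ioi_eq_Ioi hT.le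
      have hsu := setIntegral_union (Set.Ioc_disjoint_Ioi le_rfl) measurableSet_Ioi
        (htIoc i) (htIoiT i)
      rw [hu, wl_integral _ _ (hmi i) hκ0] at hsu
      linarith
    -- main integral decomposition
    have key : (∫ t in Set.Ioc (0:ℝ) T, p t * Real.exp (-κ * t))
        = (∫ t in Set.Ioc (0:ℝ) T, R t * Real.exp (-κ * t))
          + ∑ i ∈ Finset.range N,
              a i * ∫ t in Set.Ioc (0:ℝ) T, t ^ (β + (i:ℝ)) * Real.exp (-κ * t) := by
      have hcong : ∀ t ∈ Set.Ioc (0:ℝ) T,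
          p t * Real.exp (-κ * t)
            = R t * Real.exp (-κ * t)
              + ∑ i ∈ Finset.range N, a i * (t ^ (β + (i:ℝ)) * Real.exp (-κ * t)) := by
        intro t ht
        have h2 := hpt t ht.1
        simp only [hRdef]
        rw [Finset.sum_congr rfl fun i _ => (mul_assoc (a i) _ _).symm,
          ← Finset.sum_mul, ← h2]
        ring
      rw [setIntegral_congr_fun measurableSet_Ioc hcong,
        integral_add hRe (integrable_finset_sum _ fun i _ => (htIoc i).const_mul _),
        integral_finset_sum _ fun i _ => (htIoc i).const_mul _]
      congr 1
      exact Finset.sum_congr rfl fun i _ => integral_const_mul _ _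
    have hsplitR : (∫ t in Set.Ioc (0:ℝ) T, R t * Real.exp (-κ * t))
        = (∫ t in Set.Ioc (0:ℝ) δ, R t * Real.exp (-κ * t))
          + ∫ t in Set.Ioc δ T, R t * Real.exp (-κ * t) := by
      have hu : Set.Ioc (0:ℝ) δ ∪ Set.Ioc δ T = Set.Ioc 0 T :=
        Set.Ioc_union_Ioc_eq_Ioc hδ0.le hδT
      have h2 := setIntegral_union (Set.Ioc_disjoint_Ioc_of_le le_rfl) measurableSet_Ioc
        (hRe.mono_set (Set.Ioc_subset_Ioc le_rfl hδT))
        (hRe.mono_set (Set.Ioc_subset_Ioc hδ0.le le_rfl))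
      rw [hu] at h2
      exact h2
    have hpowi : ∀ i ∈ Finset.range N,
        a i * Real.Gamma (β + i + 1) * κ ^ (-β - 1 - i)
          = a i * ((1/κ) ^ (β + (i:ℝ) + 1) * Real.Gamma (β + (i:ℝ) + 1)) := by
      intro i _
      rw [hpow κ hκ0, show -(β + (i:ℝ) + 1) = -β - 1 - i by ring]
      ring
    rw [intervalIntegral.integral_of_le hT.le, key, hsplitR,
      Finset.sum_congr rfl hpowi, Finset.sum_congr rfl fun i _ => by rw [hIocIoi i]]
    simp only [hGdef, mul_sub]
    rw [Finset.sum_sub_distrib]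
    simp only [neg_mul, Finset.sum_neg_distrib]
    ring
  -- Big-O of the three pieces
  have O1 : (fun κ : ℝ => ∫ t in Set.Ioc (0:ℝ) δ, R t * Real.exp (-κ * t))
      =O[atTop] fun κ : ℝ => κ ^ (-β - 1 - N) := by
    rw [isBigO_iff]
    refine ⟨C * Real.Gamma (β + N + 1), ?_⟩
    filter_upwards [eventually_gt_atTop 0] with κ hκ0
    have hint : IntegrableOn (fun t : ℝ => C * (t ^ (β + (N:ℝ)) * Real.exp (-κ * t)))
        (Set.Ioi 0) := (wl_integrableOn _ κ hNR hκ0).const_mul _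
    have step1 : ‖∫ t in Set.Ioc (0:ℝ) δ, R t * Real.exp (-κ * t)‖
        ≤ ∫ t in Set.Ioc (0:ℝ) δ, ‖R t * Real.exp (-κ * t)‖ :=
      norm_integral_le_integral_norm _
    have step2 : (∫ t in Set.Ioc (0:ℝ) δ, ‖R t * Real.exp (-κ * t)‖)
        ≤ ∫ t in Set.Ioc (0:ℝ) δ, C * (t ^ (β + (N:ℝ)) * Real.exp (-κ * t)) := by
      refine setIntegral_mono_on
        (((hRκ κ hκ0.le).mono_set (Set.Ioc_subset_Ioc le_rfl hδT)).norm)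
        (hint.mono_set Set.Ioc_subset_Ioi_self) measurableSet_Ioc ?_
      intro t ht
      rw [norm_mul, Real.norm_eq_abs (Real.exp _), abs_of_pos (Real.exp_pos _)]
      calc ‖R t‖ * Real.exp (-κ * t)
          ≤ (C * t ^ (β + (N:ℝ))) * Real.exp (-κ * t) :=
            mul_le_mul_of_nonneg_right (hbd' t ht) (Real.exp_pos _).le
        _ = C * (t ^ (β + (N:ℝ)) * Real.exp (-κ * t)) := by ring
    have step3 : (∫ t in Set.Ioc (0:ℝ) δ, C * (t ^ (β + (N:ℝ)) * Real.exp (-κ * t)))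
        ≤ ∫ t in Set.Ioi (0:ℝ), C * (t ^ (β + (N:ℝ)) * Real.exp (-κ * t)) := by
      refine setIntegral_mono_set hint ?_ (Set.Ioc_subset_Ioi_self).eventuallyLE
      rw [EventuallyLE, ae_restrict_iff' measurableSet_Ioi]
      refine ae_of_all _ fun t ht => ?_
      have : (0:ℝ) < t := ht
      positivity
    have step4 : (∫ t in Set.Ioi (0:ℝ), C * (t ^ (β + (N:ℝ)) * Real.exp (-κ * t)))
        = (C * Real.Gamma (β + N + 1)) * κ ^ (-β - 1 - N) := by
      rw [integral_const_mul, wl_integral _ _ hNR hκ0, hpow κ hκ0,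
        show -(β + (N:ℝ) + 1) = -β - 1 - N by ring]
      ring
    have hgn : ‖(κ:ℝ) ^ (-β - 1 - (N:ℝ))‖ = κ ^ (-β - 1 - (N:ℝ)) := by
      rw [Real.norm_eq_abs, abs_of_pos (Real.rpow_pos_of_pos hκ0 _)]
    rw [hgn]
    calc ‖∫ t in Set.Ioc (0:ℝ) δ, R t * Real.exp (-κ * t)‖
        ≤ ∫ t in Set.Ioi (0:ℝ), C * (t ^ (β + (N:ℝ)) * Real.exp (-κ * t)) :=
          step1.trans (step2.trans step3)
      _ = C * Real.Gamma (β + N + 1) * κ ^ (-β - 1 - N) := step4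
  have O2 : (fun κ : ℝ => ∫ t in Set.Ioc δ T, R t * Real.exp (-κ * t))
      =O[atTop] fun κ : ℝ => κ ^ (-β - 1 - N) := by
    refine IsBigO.trans ?_ (wl_exp_littleO δ (-β - 1 - N) hδ0).isBigO
    rw [isBigO_iff]
    refine ⟨∫ t in Set.Ioc δ T, ‖R t‖, ?_⟩
    filter_upwards [eventually_ge_atTop 0] with κ hκ0
    have hRe' : IntegrableOn (fun t => R t * Real.exp (-κ * t)) (Set.Ioc δ T) :=
      (hRκ κ hκ0).mono_set (Set.Ioc_subset_Ioc hδ0.le le_rfl)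
    have hRn : IntegrableOn (fun t => ‖R t‖) (Set.Ioc δ T) :=
      (hR.mono_set (Set.Ioc_subset_Ioc hδ0.le le_rfl)).norm
    have step2 : (∫ t in Set.Ioc δ T, ‖R t * Real.exp (-κ * t)‖)
        ≤ ∫ t in Set.Ioc δ T, ‖R t‖ * Real.exp (-(δ * κ)) := by
      refine setIntegral_mono_on hRe'.norm (hRn.mul_const _) measurableSet_Ioc ?_
      intro t ht
      rw [norm_mul, Real.norm_eq_abs (Real.exp _), abs_of_pos (Real.exp_pos _)]
      refine mul_le_mul_of_nonneg_left ?_ (norm_nonneg _)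
      exact Real.exp_le_exp.2 (by nlinarith [ht.1.le])
    rw [Real.norm_eq_abs (Real.exp _), abs_of_pos (Real.exp_pos _)]
    calc ‖∫ t in Set.Ioc δ T, R t * Real.exp (-κ * t)‖
        ≤ ∫ t in Set.Ioc δ T, ‖R t * Real.exp (-κ * t)‖ := norm_integral_le_integral_norm _
      _ ≤ ∫ t in Set.Ioc δ T, ‖R t‖ * Real.exp (-(δ * κ)) := step2
      _ = (∫ t in Set.Ioc δ T, ‖R t‖) * Real.exp (-(δ * κ)) := integral_mul_const _ _
  have O3 : (fun κ : ℝ => ∑ i ∈ Finset.range N,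
        (-(a i)) * ∫ t in Set.Ioi T, t ^ (β + (i:ℝ)) * Real.exp (-κ * t))
      =O[atTop] fun κ : ℝ => κ ^ (-β - 1 - N) := by
    refine Asymptotics.IsBigO.fun_sum fun i _ => ?_
    exact ((wl_tail (β + i) T (hmi i) hT).const_mul_left
      (-(a i))).trans (wl_exp_littleO T (-β - 1 - N) hT).isBigO
  have : G =O[atTop] fun κ : ℝ => κ ^ (-β - 1 - N) := (O1.add O2).add O3
  exact this.congr' hFG.symm EventuallyEq.rfl
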